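/- arXiv:1008.3722 — 3 statements merged into one kernel-verified Lean document; each statement's English description precedes it below -/
import Mathlib

section
/- For β > 0, the only continuous function ŷ : [0,T] → ℝ satisfying the integral equation ŷ(t) = ∫_0^t (β/s) ∫_0^s ŷ(u) du ds for all t ∈ [0,T] is the zero function. -/
open intervalIntegral MeasureTheory

/-- For `β > 0`, the only continuous function `ŷ : [0,T] → ℝ` satisfying
`ŷ(t) = ∫_0^t (β/s) ∫_0^s ŷ(u) du ds` on `[0,T]` is the zero function. -/
theorem integral_equation_zero (β T : ℝ) (hβ : 0 < β) (hT : 0 < T)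
    (y : ℝ → ℝ) (hc : ContinuousOn y (Set.Icc 0 T))
    (heq : ∀ t ∈ Set.Icc (0 : ℝ) T,
      y t = ∫ s in (0 : ℝ)..t, (β / s) * ∫ u in (0 : ℝ)..s, y u) :
    ∀ t ∈ Set.Icc (0 : ℝ) T, y t = 0 := by
  obtain ⟨C, hC⟩ := (isCompact_Icc (a := (0:ℝ)) (b := T)).exists_bound_of_continuousOn hc
  have hC0 : 0 ≤ C := le_trans (norm_nonneg _) (hC 0 ⟨le_refl 0, hT.le⟩)
  have key : ∀ n : ℕ, ∀ t ∈ Set.Icc (0 : ℝ) T, |y t| ≤ C * (β * t) ^ n / n.factorial := by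
    intro n
    induction n with
    | zero => intro t ht; simpa using hC t ht
    | succ n ih =>
      intro t ht
      obtain ⟨ht0, htT⟩ := ht
      -- bound the inner integral for s ∈ Ioc 0 t
      have hbound : ∀ s ∈ Set.Ioc (0:ℝ) t,
          ‖(β / s) * ∫ u in (0 : ℝ)..s, y u‖ ≤ C * β ^ (n+1) * s ^ n / (n+1).factorial := by
        intro s ⟨hs0, hst⟩
        have hsT : s ≤ T := hst.trans htT
        have hyint : IntervalIntegrable y volume 0 s :=
          (hc.mono (Set.Icc_subset_Icc le_rfl hsT)).intervalIntegrable_of_Icc hs0.le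
        have hinner : |∫ u in (0 : ℝ)..s, y u|
            ≤ C * β ^ n / n.factorial * (s ^ (n+1) / (n+1)) := by
          have h1 : ‖∫ u in (0 : ℝ)..s, y u‖ ≤ ∫ u in (0 : ℝ)..s, ‖y u‖ :=
            norm_integral_le_integral_norm hs0.le
          have h2 : (∫ u in (0 : ℝ)..s, ‖y u‖)
              ≤ ∫ u in (0 : ℝ)..s, C * β ^ n / n.factorial * u ^ n := by
            apply intervalIntegral.integral_mono_on hs0.le hyint.norm
            · exact (Continuous.intervalIntegrable (by continuity) 0 s)
            · intro u hu
              have := ih u ⟨hu.1, hu.2.trans hsT⟩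
              rw [Real.norm_eq_abs]
              calc |y u| ≤ C * (β * u) ^ n / n.factorial := this
                _ = C * β ^ n / n.factorial * u ^ n := by ring
          have h3 : (∫ u in (0 : ℝ)..s, C * β ^ n / n.factorial * u ^ n)
              = C * β ^ n / n.factorial * (s ^ (n+1) / (n+1)) := by
            rw [intervalIntegral.integral_const_mul, integral_pow]
            ring_nf
          calc |∫ u in (0 : ℝ)..s, y u| ≤ ∫ u in (0 : ℝ)..s, ‖y u‖ := h1
            _ ≤ _ := h2.trans_eq h3
        have hβs : 0 < β / s := div_pos hβ hs0
        rw [norm_mul, Real.norm_eq_abs, Real.norm_eq_abs, abs_of_pos hβs]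
        calc β / s * |∫ u in (0 : ℝ)..s, y u|
            ≤ β / s * (C * β ^ n / n.factorial * (s ^ (n+1) / (n+1))) := by
              exact mul_le_mul_of_nonneg_left hinner hβs.le
          _ = C * β ^ (n+1) * s ^ n / (n+1).factorial := by
              rw [Nat.factorial_succ]
              field_simp
              push_cast
              ring
      have hg : IntervalIntegrable (fun s => C * β ^ (n+1) * s ^ n / (n+1).factorial)
          volume 0 t := Continuous.intervalIntegrable (by continuity) 0 t
      have hmain : |y t| ≤ |∫ s in (0:ℝ)..t, C * β ^ (n+1) * s ^ n / (n+1).factorial| := by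
        rw [heq t ⟨ht0, htT⟩, ← Real.norm_eq_abs]
        apply intervalIntegral.norm_integral_le_abs_of_norm_le _ hg
        filter_upwards [ae_restrict_mem measurableSet_uIoc] with s hs
        rw [Set.uIoc_of_le ht0] at hs
        exact hbound s hs
      have hval : (∫ s in (0:ℝ)..t, C * β ^ (n+1) * s ^ n / (n+1).factorial)
          = C * β ^ (n+1) / (n+1).factorial * (t ^ (n+1) / (n+1)) := by
        simp_rw [div_eq_mul_inv, intervalIntegral.integral_mul_const,
          intervalIntegral.integral_const_mul, integral_pow]
        ring_nf
      rw [hval] at hmain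
      have habs : |C * β ^ (n+1) / (n+1).factorial * (t ^ (n+1) / (n+1))|
          = C * β ^ (n+1) / (n+1).factorial * (t ^ (n+1) / (n+1)) := by
        apply abs_of_nonneg
        positivity
      rw [habs] at hmain
      calc |y t| ≤ C * β ^ (n+1) / (n+1).factorial * (t ^ (n+1) / (n+1)) := hmain
        _ ≤ C * β ^ (n+1) / (n+1).factorial * (t ^ (n+1) / 1) := by
            gcongr
            · exact_mod_cast Nat.succ_le_succ (Nat.zero_le n)
        _ = C * (β * t) ^ (n+1) / (n+1).factorial := by ring
  intro t ht
  have htend : Filter.Tendsto (fun n : ℕ => C * (β * t) ^ n / n.factorial)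
      Filter.atTop (nhds 0) := by
    have := FloorSemiring.tendsto_pow_div_factorial_atTop (K := ℝ) (β * t)
    have h := this.const_mul C
    simpa [mul_div_assoc] using h
  have h0 : |y t| ≤ 0 := ge_of_tendsto htend (Filter.Eventually.of_forall fun n => key n t ht)
  exact abs_nonpos_iff.mp h0
end

section
/- For β > 0, any continuous solution y : [0,T] → ℝ of the integral equation y(t) = y(0) + ∫_0^t (β/s) ∫_0^s y(u) du ds + f(t), where f is continuous with f(0) = 0, is unique: if y and ỹ are two continuous solutions with the same initial value y(0) = ỹ(0) and same f, then y = ỹ on [0,T]. -/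
open MeasureTheory intervalIntegral Set Filter

private lemma aux_intable (β T : ℝ) (g : ℝ → ℝ) (hg : ContinuousOn g (Set.Icc 0 T))
    {t : ℝ} (ht : t ∈ Set.Icc (0 : ℝ) T) :
    IntervalIntegrable (fun s => (β / s) * ∫ u in (0 : ℝ)..s, g u) volume 0 t := by
  obtain ⟨C, hC⟩ := isCompact_Icc.exists_bound_of_continuousOn hg
  have hC0 : 0 ≤ C := le_trans (norm_nonneg _) (hC 0 ⟨le_rfl, le_trans ht.1 ht.2⟩)
  have hsub : Set.Icc (0 : ℝ) t ⊆ Set.Icc 0 T := Set.Icc_subset_Icc le_rfl ht.2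
  have hgint : IntervalIntegrable g volume 0 t := by
    apply ContinuousOn.intervalIntegrable
    rw [Set.uIcc_of_le ht.1]
    exact hg.mono hsub
  have hF : ContinuousOn (fun s => ∫ u in (0 : ℝ)..s, g u) (Set.Icc 0 t) := by
    have := continuousOn_primitive_interval' (a := 0) hgint ?_
    · rwa [Set.uIcc_of_le ht.1] at this
    · rw [Set.uIcc_of_le ht.1]; exact ⟨le_rfl, ht.1⟩
  rw [intervalIntegrable_iff_integrableOn_Ioc_of_le ht.1]
  have hmeas : AEStronglyMeasurable (fun s => (β / s) * ∫ u in (0 : ℝ)..s, g u)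
      (volume.restrict (Set.Ioc (0 : ℝ) t)) := by
    apply ContinuousOn.aestronglyMeasurable _ measurableSet_Ioc
    apply ContinuousOn.mul
    · exact continuousOn_const.div continuousOn_id (fun s hs => ne_of_gt hs.1)
    · exact hF.mono Set.Ioc_subset_Icc_self
  refine (integrable_const (|β| * C)).mono' hmeas ?_
  filter_upwards [ae_restrict_mem measurableSet_Ioc] with s hs
  have hFs : ‖∫ u in (0 : ℝ)..s, g u‖ ≤ C * |s - 0| := by
    apply intervalIntegral.norm_integral_le_of_norm_le_const
    intro x hx
    rw [Set.uIoc_of_le hs.1.le] at hx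
    exact hC x ⟨hx.1.le, le_trans hx.2 (le_trans hs.2 ht.2)⟩
  rw [norm_mul]
  calc ‖β / s‖ * ‖∫ u in (0 : ℝ)..s, g u‖ ≤ ‖β / s‖ * (C * |s - 0|) := by
        exact mul_le_mul_of_nonneg_left hFs (norm_nonneg _)
    _ = |β| * C := by
        rw [sub_zero, norm_div, Real.norm_eq_abs, Real.norm_eq_abs,
          abs_of_pos hs.1]
        rw [div_mul_eq_mul_div, mul_div_assoc, mul_div_cancel_right₀ C hs.1.ne']

/-- For `β > 0`, continuous solutions of
`y(t) = y(0) + ∫_0^t (β/s) ∫_0^s y(u) du ds + f(t)` (with `f` continuous, `f(0) = 0`)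
are unique: two continuous solutions with the same initial value coincide on `[0,T]`. -/
theorem integral_equation_unique (β T : ℝ) (hβ : 0 < β) (hT : 0 < T)
    (f : ℝ → ℝ) (hf : ContinuousOn f (Set.Icc 0 T)) (hf0 : f 0 = 0)
    (y ytilde : ℝ → ℝ)
    (hcy : ContinuousOn y (Set.Icc 0 T)) (hcyt : ContinuousOn ytilde (Set.Icc 0 T))
    (h0 : y 0 = ytilde 0)
    (heqy : ∀ t ∈ Set.Icc (0 : ℝ) T,
      y t = y 0 + (∫ s in (0 : ℝ)..t, (β / s) * ∫ u in (0 : ℝ)..s, y u) + f t)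
    (heqyt : ∀ t ∈ Set.Icc (0 : ℝ) T,
      ytilde t = ytilde 0 + (∫ s in (0 : ℝ)..t, (β / s) * ∫ u in (0 : ℝ)..s, ytilde u) + f t) :
    ∀ t ∈ Set.Icc (0 : ℝ) T, y t = ytilde t := by
  set z : ℝ → ℝ := fun u => y u - ytilde u with hzdef
  have hcz : ContinuousOn z (Set.Icc 0 T) := hcy.sub hcyt
  obtain ⟨M, hM⟩ := isCompact_Icc.exists_bound_of_continuousOn hcz
  have hM0 : 0 ≤ M := le_trans (norm_nonneg _) (hM 0 ⟨le_rfl, hT.le⟩)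
  -- key identity
  have hkey : ∀ t ∈ Set.Icc (0 : ℝ) T,
      z t = ∫ s in (0 : ℝ)..t, (β / s) * ∫ u in (0 : ℝ)..s, z u := by
    intro t ht
    have h1 := heqy t ht
    have h2 := heqyt t ht
    have hinty := aux_intable β T y hcy ht
    have hintyt := aux_intable β T ytilde hcyt ht
    have : z t = (∫ s in (0 : ℝ)..t, (β / s) * ∫ u in (0 : ℝ)..s, y u) -
        ∫ s in (0 : ℝ)..t, (β / s) * ∫ u in (0 : ℝ)..s, ytilde u := by
      simp only [hzdef]
      rw [h1, h2, h0]; ring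
    rw [this, ← intervalIntegral.integral_sub hinty hintyt]
    apply intervalIntegral.integral_congr
    intro s hs
    rw [Set.uIcc_of_le ht.1] at hs
    have hyint : IntervalIntegrable y volume 0 s := by
      apply ContinuousOn.intervalIntegrable
      rw [Set.uIcc_of_le hs.1]
      exact hcy.mono (Set.Icc_subset_Icc le_rfl (le_trans hs.2 ht.2))
    have hytint : IntervalIntegrable ytilde volume 0 s := by
      apply ContinuousOn.intervalIntegrable
      rw [Set.uIcc_of_le hs.1]
      exact hcyt.mono (Set.Icc_subset_Icc le_rfl (le_trans hs.2 ht.2))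
    simp only [hzdef]
    rw [intervalIntegral.integral_sub hyint hytint]
    ring
  -- iterated bound
  have hbound : ∀ n : ℕ, ∀ t ∈ Set.Icc (0 : ℝ) T,
      |z t| ≤ M * (β * t) ^ n / n.factorial := by
    intro n
    induction n with
    | zero => intro t ht; simpa using hM t ht
    | succ n ih =>
      intro t ht
      have hzint : ∀ s ∈ Set.Icc (0 : ℝ) t, IntervalIntegrable z volume 0 s := by
        intro s hs
        apply ContinuousOn.intervalIntegrable
        rw [Set.uIcc_of_le hs.1]
        exact hcz.mono (Set.Icc_subset_Icc le_rfl (le_trans hs.2 ht.2))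
      -- pointwise bound on the inner integral
      have hinner : ∀ s ∈ Set.Ioc (0 : ℝ) t,
          |(β / s) * ∫ u in (0 : ℝ)..s, z u| ≤
            M * β ^ (n + 1) / (n + 1).factorial * s ^ n := by
        intro s hs
        have hsT : s ∈ Set.Icc (0 : ℝ) T := ⟨hs.1.le, le_trans hs.2 ht.2⟩
        have hb : ‖∫ u in (0 : ℝ)..s, z u‖ ≤
            |∫ u in (0 : ℝ)..s, M * β ^ n / n.factorial * u ^ n| := by
          apply intervalIntegral.norm_integral_le_abs_of_norm_le
          · filter_upwards [ae_restrict_mem measurableSet_uIoc] with u hu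
            rw [Set.uIoc_of_le hs.1.le] at hu
            have := ih u ⟨hu.1.le, le_trans hu.2 hsT.2⟩
            calc ‖z u‖ ≤ M * (β * u) ^ n / n.factorial := this
              _ = M * β ^ n / n.factorial * u ^ n := by rw [mul_pow]; ring
          · exact ((continuous_const.mul (continuous_pow n)).intervalIntegrable 0 s)
        rw [intervalIntegral.integral_const_mul, integral_pow] at hb
        simp only [zero_pow (Nat.succ_ne_zero n), sub_zero] at hb
        have hs0 : (0 : ℝ) < s := hs.1
        have hnn : (0:ℝ) ≤ M * β ^ n / n.factorial * (s ^ (n + 1) / ((n : ℝ) + 1)) :=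
          mul_nonneg (by positivity) (div_nonneg (pow_nonneg hs0.le _) (by positivity))
        rw [abs_of_nonneg hnn] at hb
        have hb' : |∫ u in (0 : ℝ)..s, z u| ≤
            M * β ^ n / n.factorial * (s ^ (n + 1) / ((n : ℝ) + 1)) := hb
        rw [abs_mul, abs_div, abs_of_pos hβ, abs_of_pos hs0]
        calc β / s * |∫ u in (0 : ℝ)..s, z u| ≤
            β / s * (M * β ^ n / n.factorial * (s ^ (n + 1) / (n + 1))) := by
              exact mul_le_mul_of_nonneg_left hb' (by positivity)
          _ = M * β ^ (n + 1) / (n + 1).factorial * s ^ n := by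
              rw [Nat.factorial_succ]
              field_simp
              push_cast
              ring
      -- integrate the bound
      rw [← Real.norm_eq_abs, hkey t ht]
      have hgi : IntervalIntegrable
          (fun s => M * β ^ (n + 1) / (n + 1).factorial * s ^ n) volume 0 t :=
        (continuous_const.mul (continuous_pow n)).intervalIntegrable 0 t
      have hae : ∀ᵐ s ∂volume.restrict (Set.uIoc (0:ℝ) t),
          ‖(β / s) * ∫ u in (0 : ℝ)..s, z u‖ ≤
            M * β ^ (n + 1) / (n + 1).factorial * s ^ n := by
        filter_upwards [ae_restrict_mem measurableSet_uIoc] with s hs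
        rw [Set.uIoc_of_le ht.1] at hs
        exact hinner s hs
      refine le_trans (intervalIntegral.norm_integral_le_abs_of_norm_le hae hgi) ?_
      rw [intervalIntegral.integral_const_mul, integral_pow]
      have ht0 : (0 : ℝ) ≤ t := ht.1
      simp only [zero_pow (Nat.succ_ne_zero n), sub_zero]
      rw [abs_of_nonneg (mul_nonneg (by positivity)
        (div_nonneg (pow_nonneg ht0 _) (by positivity)))]
      have hle : M * β ^ (n + 1) / (n + 1).factorial * (t ^ (n + 1) / ((n : ℝ) + 1)) ≤
          M * β ^ (n + 1) / (n + 1).factorial * t ^ (n + 1) := by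
        apply mul_le_mul_of_nonneg_left _ (by positivity)
        rw [div_le_iff₀ (by positivity)]
        nlinarith [pow_nonneg ht0 (n + 1), (by exact_mod_cast Nat.one_le_cast.mpr (Nat.one_le_iff_ne_zero.mpr (Nat.succ_ne_zero n)) : (1:ℝ) ≤ (n:ℝ) + 1)]
      refine le_trans hle (le_of_eq ?_)
      rw [mul_pow]; ring
  -- conclude
  intro t ht
  have hlim : Tendsto (fun n : ℕ => M * (β * t) ^ n / n.factorial) atTop (nhds 0) := by
    have := (FloorSemiring.tendsto_pow_div_factorial_atTop (β * t) (K := ℝ)).const_mul M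
    simpa [mul_div_assoc] using this
  have : |z t| ≤ 0 := ge_of_tendsto hlim (Filter.Eventually.of_forall fun n => hbound n t ht)
  have hz0 : z t = 0 := abs_eq_zero.mp (le_antisymm this (abs_nonneg _))
  have : y t - ytilde t = 0 := hz0
  linarith
end

section
/- Fix β > 0, T > 0, t ∈ (0,T). For the denominator D(s) = I_0(2√(βT))K_1(2√(βs)) + K_0(2√(βT))I_1(2√(βs)), the following uniform bounds hold for 0 < s ≤ t: 0 < √(2T)·I_0(2√(βT))·K_1(2√(βT)) ≤ √(2s)·D(s) ≤ I_0(2√(βT))/√(2β) + √(2T)·K_0(2√(βT))·I_1(2√(βT)). -/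
/-- Modified Bessel function of the first kind of integer order,
`I_ν(x) = Σ_{k=0}^∞ (x/2)^{2k+ν} / (k! (k+ν)!)`. -/
noncomputable def besselI (ν : ℕ) (x : ℝ) : ℝ :=
  ∑' k : ℕ, (x / 2) ^ (2 * k + ν) / ((Nat.factorial k : ℝ) * (Nat.factorial (k + ν) : ℝ))

/-- Modified Bessel function of the second kind of integer order, via the
standard integral representation `K_ν(x) = ∫_0^∞ e^{-x cosh t} cosh(ν t) dt`. -/
noncomputable def besselK (ν : ℕ) (x : ℝ) : ℝ :=
  ∫ t in Set.Ioi (0 : ℝ), Real.exp (-x * Real.cosh t) * Real.cosh ((ν : ℝ) * t)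

open MeasureTheory Real Set

lemma summable_besselI (ν : ℕ) {x : ℝ} (hx : 0 ≤ x) :
    Summable fun k : ℕ =>
      (x / 2) ^ (2 * k + ν) / ((Nat.factorial k : ℝ) * (Nat.factorial (k + ν) : ℝ)) := by
  have hg : Summable fun k : ℕ => (x/2)^ν * (((x/2)^2)^k / (Nat.factorial k : ℝ)) :=
    (Real.summable_pow_div_factorial ((x/2)^2)).mul_left ((x/2)^ν)
  refine Summable.of_nonneg_of_le (fun k => by positivity) (fun k => ?_) hg
  rw [pow_add, pow_mul]
  have h1 : (1:ℝ) ≤ (Nat.factorial (k + ν) : ℝ) := by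
    exact_mod_cast Nat.one_le_iff_ne_zero.2 (Nat.factorial_ne_zero _)
  have hk : (0:ℝ) < (Nat.factorial k : ℝ) := by
    exact_mod_cast Nat.factorial_pos k
  calc ((x/2)^2)^k * (x/2)^ν / ((Nat.factorial k : ℝ) * (Nat.factorial (k+ν) : ℝ))
      ≤ ((x/2)^2)^k * (x/2)^ν / ((Nat.factorial k : ℝ) * 1) := by
        gcongr
    _ = (x/2)^ν * (((x/2)^2)^k / (Nat.factorial k : ℝ)) := by
        rw [mul_one]; ring

lemma besselI_nonneg (ν : ℕ) {x : ℝ} (hx : 0 ≤ x) : 0 ≤ besselI ν x :=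
  tsum_nonneg fun k => by positivity

lemma one_le_besselI_zero {x : ℝ} (hx : 0 ≤ x) : 1 ≤ besselI 0 x := by
  have h := Summable.le_tsum (summable_besselI 0 hx) 0 (fun j _ => by positivity)
  simpa [besselI] using h

lemma mul_besselI_one_mono {x y : ℝ} (hx : 0 ≤ x) (hxy : x ≤ y) :
    x * besselI 1 x ≤ y * besselI 1 y := by
  have hy : 0 ≤ y := hx.trans hxy
  rw [besselI, besselI, ← tsum_mul_left, ← tsum_mul_left]
  refine Summable.tsum_le_tsum (fun k => ?_) ((summable_besselI 1 hx).mul_left x)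
    ((summable_besselI 1 hy).mul_left y)
  gcongr

lemma integrableOn_exp_neg' : IntegrableOn (fun v : ℝ => Real.exp (-v)) (Ioi 0) := by
  simpa using exp_neg_integrableOn_Ioi (0:ℝ) one_pos

lemma le_sqrt_add (v w : ℝ) (hv : 0 ≤ v) : v ≤ Real.sqrt (v^2 + w^2) := by
  have h := Real.sqrt_le_sqrt (show v^2 ≤ v^2 + w^2 by nlinarith)
  rwa [Real.sqrt_sq hv] at h

lemma integrableOn_expsqrt (w : ℝ) :
    IntegrableOn (fun v : ℝ => Real.exp (-Real.sqrt (v^2 + w^2))) (Ioi 0) := by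
  refine Integrable.mono' integrableOn_exp_neg' ?_ ?_
  · exact Continuous.aestronglyMeasurable (by continuity)
  · filter_upwards [ae_restrict_mem measurableSet_Ioi] with v hv
    rw [Real.norm_eq_abs, abs_of_pos (Real.exp_pos _)]
    exact Real.exp_le_exp.2 (neg_le_neg (le_sqrt_add v w (le_of_lt hv)))

lemma G_le_one (w : ℝ) : (∫ v in Ioi (0:ℝ), Real.exp (-Real.sqrt (v^2 + w^2))) ≤ 1 := by
  rw [← integral_exp_neg_Ioi_zero]
  refine setIntegral_mono_on (integrableOn_expsqrt w) integrableOn_exp_neg'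
    measurableSet_Ioi (fun v hv => ?_)
  exact Real.exp_le_exp.2 (neg_le_neg (le_sqrt_add v w (le_of_lt hv)))

lemma G_anti {w1 w2 : ℝ} (h0 : 0 ≤ w1) (h : w1 ≤ w2) :
    (∫ v in Ioi (0:ℝ), Real.exp (-Real.sqrt (v^2 + w2^2))) ≤
      ∫ v in Ioi (0:ℝ), Real.exp (-Real.sqrt (v^2 + w1^2)) := by
  refine setIntegral_mono_on (integrableOn_expsqrt w2) (integrableOn_expsqrt w1)
    measurableSet_Ioi (fun v hv => ?_)
  refine Real.exp_le_exp.2 (neg_le_neg (Real.sqrt_le_sqrt ?_))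
  nlinarith

lemma G_pos {w : ℝ} (hw : 0 ≤ w) :
    0 < ∫ v in Ioi (0:ℝ), Real.exp (-Real.sqrt (v^2 + w^2)) := by
  have hle : ∀ v ∈ Ioi (0:ℝ), Real.exp (-w) * Real.exp (-v) ≤
      Real.exp (-Real.sqrt (v^2 + w^2)) := by
    intro v hv
    simp only [mem_Ioi] at hv
    rw [← Real.exp_add]
    refine Real.exp_le_exp.2 ?_
    have h := Real.sqrt_le_sqrt (show v^2 + w^2 ≤ (w+v)^2 by nlinarith)
    rw [Real.sqrt_sq (by linarith)] at h
    linarith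
  calc (0:ℝ) < Real.exp (-w) * 1 := by positivity
    _ = ∫ v in Ioi (0:ℝ), Real.exp (-w) * Real.exp (-v) := by
        rw [MeasureTheory.integral_const_mul, integral_exp_neg_Ioi_zero, mul_one]
    _ ≤ _ := setIntegral_mono_on (integrableOn_exp_neg'.const_mul _)
        (integrableOn_expsqrt w) measurableSet_Ioi hle

lemma besselK_nonneg (ν : ℕ) (x : ℝ) : 0 ≤ besselK ν x :=
  setIntegral_nonneg measurableSet_Ioi fun t _ =>
    mul_nonneg (Real.exp_pos _).le (Real.cosh_pos _).le

lemma image_sinh {w : ℝ} (hw : 0 < w) :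
    (fun u => w * Real.sinh u) '' (Ioi 0) = Ioi (0:ℝ) := by
  ext v
  constructor
  · rintro ⟨u, hu, rfl⟩
    exact mul_pos hw (by rwa [← Real.sinh_zero, Real.sinh_lt_sinh])
  · intro hv
    refine ⟨Real.arsinh (v / w), ?_, ?_⟩
    · simp only [mem_Ioi] at hv
      rw [mem_Ioi, ← Real.arsinh_zero, Real.arsinh_lt_arsinh]
      positivity
    · show w * Real.sinh (Real.arsinh (v / w)) = v
      rw [Real.sinh_arsinh]
      field_simp

lemma mul_besselK_one {w : ℝ} (hw : 0 < w) :
    w * besselK 1 w = ∫ v in Ioi (0:ℝ), Real.exp (-Real.sqrt (v^2 + w^2)) := by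
  have hderiv : ∀ u ∈ Ioi (0:ℝ), HasDerivWithinAt (fun u => w * Real.sinh u)
      (w * Real.cosh u) (Ioi 0) u :=
    fun u _ => ((Real.hasDerivAt_sinh u).const_mul w).hasDerivWithinAt
  have hinj : InjOn (fun u => w * Real.sinh u) (Ioi 0) := by
    intro u _ u' _ h
    exact Real.sinh_injective (mul_left_cancel₀ hw.ne' h)
  have hcov := integral_image_eq_integral_abs_deriv_smul measurableSet_Ioi hderiv hinj
      (fun v => Real.exp (-Real.sqrt (v^2 + w^2)))
  rw [image_sinh hw] at hcov
  rw [hcov, besselK, ← MeasureTheory.integral_const_mul]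
  refine setIntegral_congr_fun measurableSet_Ioi (fun u _ => ?_)
  have hcosh : 0 < Real.cosh u := Real.cosh_pos u
  have hs : Real.sqrt ((w * Real.sinh u)^2 + w^2) = w * Real.cosh u := by
    rw [show (w * Real.sinh u)^2 + w^2 = (w * Real.cosh u)^2 by rw [mul_pow, mul_pow]; nlinarith [Real.cosh_sq u],
      Real.sqrt_sq (by positivity)]
  rw [smul_eq_mul, hs, abs_of_pos (by positivity)]
  push_cast
  rw [one_mul]
  ring

/-- Uniform bounds for the denominator
`D(s) = I_0(2√(βT)) K_1(2√(βs)) + K_0(2√(βT)) I_1(2√(βs))` over `0 < s ≤ t < T`. -/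
theorem denominator_bounds (β t T : ℝ) (hβ : 0 < β) (hT : 0 < T) (ht : 0 < t) (htT : t < T) :
    ∀ s : ℝ, 0 < s → s ≤ t →
      (0 < Real.sqrt (2 * T) * besselI 0 (2 * Real.sqrt (β * T)) *
          besselK 1 (2 * Real.sqrt (β * T))) ∧
      Real.sqrt (2 * T) * besselI 0 (2 * Real.sqrt (β * T)) *
          besselK 1 (2 * Real.sqrt (β * T)) ≤
        Real.sqrt (2 * s) *
          (besselI 0 (2 * Real.sqrt (β * T)) * besselK 1 (2 * Real.sqrt (β * s)) +
            besselK 0 (2 * Real.sqrt (β * T)) * besselI 1 (2 * Real.sqrt (β * s))) ∧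
      Real.sqrt (2 * s) *
          (besselI 0 (2 * Real.sqrt (β * T)) * besselK 1 (2 * Real.sqrt (β * s)) +
            besselK 0 (2 * Real.sqrt (β * T)) * besselI 1 (2 * Real.sqrt (β * s))) ≤
        besselI 0 (2 * Real.sqrt (β * T)) / Real.sqrt (2 * β) +
          Real.sqrt (2 * T) * besselK 0 (2 * Real.sqrt (β * T)) *
            besselI 1 (2 * Real.sqrt (β * T)) := by
  intro s hs hst
  have hsT : s < T := lt_of_le_of_lt hst htT
  set a := 2 * Real.sqrt (β * T) with ha_def
  set b := 2 * Real.sqrt (β * s) with hb_def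
  have ha : 0 < a := by positivity
  have hb : 0 < b := by positivity
  have hba : b ≤ a := by
    have := Real.sqrt_le_sqrt (show β * s ≤ β * T by nlinarith)
    rw [ha_def, hb_def]; linarith
  have hc : 0 < Real.sqrt (2 * β) := by positivity
  have hcs : Real.sqrt (2 * β) * Real.sqrt (2 * s) = b := by
    rw [← Real.sqrt_mul (by positivity), show (2*β)*(2*s) = 2^2*(β*s) by ring,
      Real.sqrt_mul (by positivity), Real.sqrt_sq (by norm_num), hb_def]
  have hcT : Real.sqrt (2 * β) * Real.sqrt (2 * T) = a := by
    rw [← Real.sqrt_mul (by positivity), show (2*β)*(2*T) = 2^2*(β*T) by ring,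
      Real.sqrt_mul (by positivity), Real.sqrt_sq (by norm_num), ha_def]
  have hGa := mul_besselK_one ha
  have hGb := mul_besselK_one hb
  have h1 : a * besselK 1 a ≤ b * besselK 1 b := by rw [hGa, hGb]; exact G_anti hb.le hba
  have h2 : b * besselK 1 b ≤ 1 := by rw [hGb]; exact G_le_one b
  have h5 : 0 < a * besselK 1 a := by rw [hGa]; exact G_pos ha.le
  have h3 : b * besselI 1 b ≤ a * besselI 1 a := mul_besselI_one_mono hb.le hba
  have hA : 1 ≤ besselI 0 a := one_le_besselI_zero ha.le
  have hK0 : 0 ≤ besselK 0 a := besselK_nonneg 0 a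
  have hI1b : 0 ≤ besselI 1 b := besselI_nonneg 1 hb.le
  have hKa1 : 0 < besselK 1 a := by nlinarith [besselK_nonneg 1 a]
  refine ⟨by positivity, ?_, ?_⟩
  · refine le_of_mul_le_mul_left ?_ hc
    have e1 : Real.sqrt (2*β) * (Real.sqrt (2*T) * besselI 0 a * besselK 1 a)
        = besselI 0 a * (a * besselK 1 a) := by rw [← hcT]; ring
    have e2 : Real.sqrt (2*β) * (Real.sqrt (2*s) *
          (besselI 0 a * besselK 1 b + besselK 0 a * besselI 1 b))
        = besselI 0 a * (b * besselK 1 b) + besselK 0 a * (b * besselI 1 b) := by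
      rw [← hcs]; ring
    rw [e1, e2]
    have hmul := mul_le_mul_of_nonneg_left h1 (by linarith : (0:ℝ) ≤ besselI 0 a)
    have hnn : 0 ≤ besselK 0 a * (b * besselI 1 b) :=
      mul_nonneg hK0 (mul_nonneg hb.le hI1b)
    linarith
  · refine le_of_mul_le_mul_left ?_ hc
    have e2 : Real.sqrt (2*β) * (Real.sqrt (2*s) *
          (besselI 0 a * besselK 1 b + besselK 0 a * besselI 1 b))
        = besselI 0 a * (b * besselK 1 b) + besselK 0 a * (b * besselI 1 b) := by
      rw [← hcs]; ring
    have e3 : Real.sqrt (2*β) * (besselI 0 a / Real.sqrt (2*β) +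
          Real.sqrt (2*T) * besselK 0 a * besselI 1 a)
        = besselI 0 a + besselK 0 a * (a * besselI 1 a) := by
      rw [← hcT]; field_simp
    rw [e2, e3]
    have hmul2 := mul_le_mul_of_nonneg_left h2 (by linarith : (0:ℝ) ≤ besselI 0 a)
    have hmul3 := mul_le_mul_of_nonneg_left h3 hK0
    linarith
end
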